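/- In the setting of the two-layer network with Huberized ReLU activations and logistic loss, suppose additionally that x_s · x_q ≥ 0 for all pairs s, q, that h = 1/p, and bias terms are zero. If C₁ is a sufficiently large absolute constant, n ≥ 2, and L(V) ≤ 1/n^{1+C₁}, then ‖∇_V L(V)‖ ≥ (5/6) · L(V) · log(1/L(V)) / ‖V‖, where ‖V‖ is the Frobenius norm. -/

import Mathlib

noncomputable def hrelu (h z : ℝ) : ℝ :=
  if z < 0 then 0 else if z ≤ h then z^2/(2*h) else z - h/2

noncomputable def hrelu' (h z : ℝ) : ℝ :=
  if z < 0 then 0 else if z ≤ h then z/h else 1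

/-- output of the two-layer network with hidden weights `V` on input `xx` -/
noncomputable def netOut (p d : ℕ) (h : ℝ) (u : Fin (2*p) → ℝ)
    (V : Fin (2*p) → EuclideanSpace ℝ (Fin d))
    (xx : EuclideanSpace ℝ (Fin d)) : ℝ :=
  ∑ i, u i * hrelu h (inner ℝ (V i) xx)

/-- average logistic training loss -/
noncomputable def trainLoss (p n d : ℕ) (h : ℝ) (u : Fin (2*p) → ℝ)
    (x : Fin n → EuclideanSpace ℝ (Fin d)) (y : Fin n → ℝ)
    (V : Fin (2*p) → EuclideanSpace ℝ (Fin d)) : ℝ :=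
  (1 / (n : ℝ)) * ∑ s, Real.log (1 + Real.exp (-(y s) * netOut p d h u V (x s)))

/-- gradient of the loss with respect to the row `v_i` -/
noncomputable def lossGradRow (p n d : ℕ) (h : ℝ) (u : Fin (2*p) → ℝ)
    (x : Fin n → EuclideanSpace ℝ (Fin d)) (y : Fin n → ℝ)
    (V : Fin (2*p) → EuclideanSpace ℝ (Fin d)) (i : Fin (2*p)) :
    EuclideanSpace ℝ (Fin d) :=
  (-(u i) / (n : ℝ)) • ∑ s,
    (hrelu' h (inner ℝ (V i) (x s)) * y s /
      (1 + Real.exp (y s * netOut p d h u V (x s)))) • x s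

lemma resid_nonneg {h : ℝ} (hh : 0 < h) (z : ℝ) :
    0 ≤ hrelu' h z * z - hrelu h z := by
  unfold hrelu hrelu'
  split_ifs with h1 h2
  · simp
  · push_neg at h1
    have e : z/h*z - z^2/(2*h) = z^2/(2*h) := by field_simp; ring
    rw [e]; positivity
  · linarith

lemma resid_le {h : ℝ} (hh : 0 < h) (z : ℝ) :
    hrelu' h z * z - hrelu h z ≤ h/2 := by
  unfold hrelu hrelu'
  split_ifs with h1 h2
  · simp; positivity
  · push_neg at h1
    have e : z/h*z - z^2/(2*h) = z^2/(2*h) := by field_simp; ring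
    rw [e, div_le_iff₀ (by positivity)]
    nlinarith
  · linarith

lemma key_ineq {a t c : ℝ} (hc : 0.6931 ≤ c) (ht : 0 ≤ t)
    (hta : t * a ≤ 1) (htc : t * c ≤ 1/2) (ha : 16 + 10 * c ≤ a) :
    (5/6) * ((1+t) * (a + 2*c)) ≤ a - 1 := by nlinarith

set_option maxHeartbeats 1000000 in
theorem stmt_12 :
    ∃ C₁ : ℝ, 0 < C₁ ∧
      ∀ (p n d : ℕ) (h : ℝ) (u : Fin (2*p) → ℝ)
        (x : Fin n → EuclideanSpace ℝ (Fin d)) (y : Fin n → ℝ)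
        (V : Fin (2*p) → EuclideanSpace ℝ (Fin d)),
        1 ≤ p → 2 ≤ n →
        h = 1 / (p : ℝ) →
        (∀ i : Fin (2*p), u i = if (i : ℕ) < p then 1 else -1) →
        (∀ s, ‖x s‖ = 1) →
        (∀ s q, (0:ℝ) ≤ inner ℝ (x s) (x q)) →
        (∀ s, y s = 1 ∨ y s = -1) →
        trainLoss p n d h u x y V ≤ 1 / (n : ℝ) ^ ((1:ℝ) + C₁) →
        Real.sqrt (∑ i, ‖lossGradRow p n d h u x y V i‖^2) ≥
          (5/6) * trainLoss p n d h u x y V *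
            Real.log (1 / trainLoss p n d h u x y V) /
            Real.sqrt (∑ i, ‖V i‖^2) := by
  refine ⟨50, by norm_num, ?_⟩
  intro p n d h u x y V hp hn hh hu hxnorm hxq hy hL
  have hnR : (2:ℝ) ≤ (n:ℝ) := by exact_mod_cast hn
  have hn0 : (0:ℝ) < (n:ℝ) := by linarith
  have hppos : (0:ℝ) < (p:ℝ) := by exact_mod_cast hp
  have hhpos : 0 < h := by rw [hh]; positivity
  set L := trainLoss p n d h u x y V with hLdef
  set f : Fin n → ℝ := fun s => netOut p d h u V (x s) with hfdef
  set a : Fin n → ℝ := fun s => y s * f s with hadef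
  set t : Fin n → ℝ := fun s => Real.exp (-(a s)) with htdef
  set ℓ : Fin n → ℝ := fun s => Real.log (1 + t s) with hldef
  set D := Real.log (1 / L) with hDdef
  have hLsum : L = (1/(n:ℝ)) * ∑ s, ℓ s := by
    simp only [hLdef, trainLoss, hldef, htdef, hadef, hfdef, neg_mul]
  have htpos : ∀ s, 0 < t s := fun s => Real.exp_pos _
  have hlpos : ∀ s, 0 < ℓ s := fun s => Real.log_pos (by have := htpos s; linarith)
  have hLpos : 0 < L := by
    rw [hLsum]
    have : (0:ℝ) < ∑ s, ℓ s := by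
      haveI : Nonempty (Fin n) := Fin.pos_iff_nonempty.mp (by omega)
      exact Finset.sum_pos (fun s _ => hlpos s) Finset.univ_nonempty
    positivity
  have hpow : L ≤ 1/(n:ℝ)^(51:ℕ) := by
    have e : (n:ℝ)^((1:ℝ)+50) = (n:ℝ)^(51:ℕ) := by
      rw [show (1:ℝ)+50 = ((51:ℕ):ℝ) by norm_num, Real.rpow_natCast]
    rw [← e]; exact hL
  have hn51 : (0:ℝ) < (n:ℝ)^(51:ℕ) := by positivity
  have hlsle : ∀ s, ℓ s ≤ (n:ℝ) * L := by
    intro s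
    have h1 : ℓ s ≤ ∑ q, ℓ q :=
      Finset.single_le_sum (fun q _ => (hlpos q).le) (Finset.mem_univ s)
    rw [hLsum]
    calc ℓ s ≤ ∑ q, ℓ q := h1
    _ = (n:ℝ) * ((1/(n:ℝ)) * ∑ q, ℓ q) := by field_simp
  have hnL : (n:ℝ) * L ≤ 1/(n:ℝ)^(50:ℕ) := by
    calc (n:ℝ) * L ≤ (n:ℝ) * (1/(n:ℝ)^(51:ℕ)) := by
          exact mul_le_mul_of_nonneg_left hpow hn0.le
    _ = 1/(n:ℝ)^(50:ℕ) := by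
          rw [mul_one_div]; rw [eq_div_iff (by positivity)]
          field_simp
  have h50 : (2:ℝ)^(50:ℕ) ≤ (n:ℝ)^(50:ℕ) := pow_le_pow_left₀ (by norm_num) hnR 50
  have h49 : (4:ℝ) ≤ (n:ℝ)^(49:ℕ) :=
    le_trans (by norm_num) (pow_le_pow_left₀ (by norm_num : (0:ℝ) ≤ 2) hnR 49)
  have hl_small : ∀ s, ℓ s ≤ Real.log 2 := by
    intro s
    have : ℓ s ≤ 1/(2:ℝ)^(50:ℕ) := by
      refine le_trans (hlsle s) (le_trans hnL ?_)
      exact one_div_le_one_div_of_le (by positivity) h50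
    refine le_trans this ?_
    have h2 := Real.log_two_gt_d9
    have hnum : (1:ℝ)/2^(50:ℕ) ≤ 0.6931471803 := by norm_num
    linarith
  have ht_exp : ∀ s, Real.exp (ℓ s) = 1 + t s := fun s =>
    Real.exp_log (by have := htpos s; linarith)
  have ht1 : ∀ s, t s ≤ 1 := by
    intro s
    have h1 : Real.exp (ℓ s) ≤ 2 := by
      calc Real.exp (ℓ s) ≤ Real.exp (Real.log 2) := Real.exp_le_exp.mpr (hl_small s)
      _ = 2 := Real.exp_log (by norm_num)
    have := ht_exp s; linarith
  have ht2l : ∀ s, t s ≤ 2 * ℓ s := by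
    intro s
    have h1 : 1 - (1 + t s)⁻¹ ≤ ℓ s :=
      Real.one_sub_inv_le_log_of_pos (by have := htpos s; linarith)
    have h2 : t s / 2 ≤ t s / (1 + t s) := by
      apply div_le_div_of_nonneg_left (htpos s).le (by have := htpos s; linarith)
      have := ht1 s; linarith
    have h3 : 1 - (1 + t s)⁻¹ = t s / (1 + t s) := by
      have : (0:ℝ) < 1 + t s := by have := htpos s; linarith
      field_simp; ring
    linarith
  have ht_small : ∀ s, t s ≤ 2/(n:ℝ)^(50:ℕ) := by
    intro s
    calc t s ≤ 2 * ℓ s := ht2l s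
    _ ≤ 2 * ((n:ℝ) * L) := by have := hlsle s; linarith
    _ ≤ 2 * (1/(n:ℝ)^(50:ℕ)) := by have := hnL; linarith
    _ = 2/(n:ℝ)^(50:ℕ) := by ring
  have ha_eq : ∀ s, a s = -Real.log (t s) := by
    intro s; simp [htdef]
  have hclb : (0.6931:ℝ) ≤ Real.log (n:ℝ) := by
    have h1 : Real.log 2 ≤ Real.log (n:ℝ) := Real.log_le_log (by norm_num) hnR
    have h2 := Real.log_two_gt_d9; linarith
  have hlog2ub : Real.log 2 ≤ 0.6932 := by
    have h2 := Real.log_two_lt_d9; linarith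
  have ha_lb : ∀ s, 50 * Real.log (n:ℝ) - Real.log 2 ≤ a s := by
    intro s
    rw [ha_eq s]
    have h1 : Real.log (t s) ≤ Real.log (2/(n:ℝ)^(50:ℕ)) :=
      Real.log_le_log (htpos s) (ht_small s)
    have h2 : Real.log (2/(n:ℝ)^(50:ℕ)) = Real.log 2 - 50 * Real.log (n:ℝ) := by
      rw [Real.log_div (by norm_num) (by positivity), Real.log_pow]
      push_cast; ring
    linarith [h1, h2.symm ▸ h1]
  have ha16 : ∀ s, 16 + 10 * Real.log (n:ℝ) ≤ a s := by
    intro s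
    have := ha_lb s
    have := hclb
    have := hlog2ub
    nlinarith
  have hta1 : ∀ s, t s * a s ≤ 1 := by
    intro s
    have h1 : a s ≤ Real.exp (a s) := (Real.add_one_le_exp (a s)).trans' (by linarith)
    calc t s * a s ≤ t s * Real.exp (a s) :=
          mul_le_mul_of_nonneg_left h1 (htpos s).le
    _ = 1 := by rw [htdef]; simp [← Real.exp_add]
  have htc : ∀ s, t s * Real.log (n:ℝ) ≤ 1/2 := by
    intro s
    have hlogn : Real.log (n:ℝ) ≤ (n:ℝ) := by
      have := Real.log_le_sub_one_of_pos hn0; linarith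
    calc t s * Real.log (n:ℝ) ≤ (2/(n:ℝ)^(50:ℕ)) * (n:ℝ) := by
          apply mul_le_mul (ht_small s) hlogn ?_ (by positivity)
          · calc (0:ℝ) ≤ 0.6931 := by norm_num
            _ ≤ Real.log (n:ℝ) := hclb
    _ = 2/(n:ℝ)^(49:ℕ) := by
          rw [div_mul_eq_mul_div, eq_div_iff (by positivity)]
          field_simp
    _ ≤ 2/4 := by gcongr
    _ ≤ 1/2 := by norm_num
  have hD0 : 0 ≤ D := by
    rw [hDdef]
    apply Real.log_nonneg
    rw [le_div_iff₀ hLpos, one_mul]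
    calc L ≤ 1/(n:ℝ)^(51:ℕ) := hpow
    _ ≤ 1 := by
        rw [div_le_one hn51]
        calc (1:ℝ) ≤ 2^(51:ℕ) := by norm_num
        _ ≤ (n:ℝ)^(51:ℕ) := pow_le_pow_left₀ (by norm_num) hnR 51
  have hD_le : ∀ s, D ≤ a s + 2 * Real.log (n:ℝ) := by
    intro s
    have h1 : 1/L ≤ (n:ℝ)/ℓ s := by
      rw [div_le_div_iff₀ hLpos (hlpos s)]
      have := hlsle s; linarith
    have h2 : D ≤ Real.log ((n:ℝ)/ℓ s) := by
      rw [hDdef]; exact Real.log_le_log (by positivity) h1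
    have h3 : Real.log ((n:ℝ)/ℓ s) = Real.log (n:ℝ) - Real.log (ℓ s) :=
      Real.log_div (by positivity) (hlpos s).ne'
    have h4 : Real.log (t s / 2) ≤ Real.log (ℓ s) := by
      apply Real.log_le_log (by have := htpos s; positivity)
      have := ht2l s; linarith
    have h5 : Real.log (t s / 2) = -(a s) - Real.log 2 := by
      rw [Real.log_div (htpos s).ne' (by norm_num)]
      rw [htdef]; simp
    have h6 : Real.log 2 ≤ Real.log (n:ℝ) := Real.log_le_log (by norm_num) hnR
    linarith
  -- core quantities
  have hf' : ∀ s, netOut p d h u V (x s) = f s := fun _ => rfl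
  set G : Fin n → ℝ := fun s =>
    ∑ i, u i * (hrelu' h ((inner ℝ (V i) (x s) : ℝ)) * (inner ℝ (V i) (x s) : ℝ))
    with hGdef
  have huabs : ∀ i, |u i| = 1 := by
    intro i; rw [hu i]; split_ifs <;> norm_num
  have hGf : ∀ s, |G s - f s| ≤ 1 := by
    intro s
    have e1 : G s - f s = ∑ i, u i *
        (hrelu' h ((inner ℝ (V i) (x s) : ℝ)) * (inner ℝ (V i) (x s) : ℝ)
          - hrelu h ((inner ℝ (V i) (x s) : ℝ))) := by
      simp only [hGdef, hfdef, netOut, ← Finset.sum_sub_distrib]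
      exact Finset.sum_congr rfl (fun i _ => by ring)
    rw [e1]
    calc |∑ i, u i * (hrelu' h ((inner ℝ (V i) (x s) : ℝ)) * (inner ℝ (V i) (x s) : ℝ)
          - hrelu h ((inner ℝ (V i) (x s) : ℝ)))|
        ≤ ∑ i, |u i * (hrelu' h ((inner ℝ (V i) (x s) : ℝ)) * (inner ℝ (V i) (x s) : ℝ)
          - hrelu h ((inner ℝ (V i) (x s) : ℝ)))| := Finset.abs_sum_le_sum_abs _ _
      _ ≤ ∑ _i : Fin (2*p), h/2 := by
          apply Finset.sum_le_sum
          intro i _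
          rw [abs_mul, huabs i, one_mul]
          rw [abs_of_nonneg (resid_nonneg hhpos _)]
          exact resid_le hhpos _
      _ = 1 := by
          rw [Finset.sum_const, Finset.card_univ, Fintype.card_fin]
          rw [hh, nsmul_eq_mul]; push_cast; field_simp
  have hyG : ∀ s, a s - 1 ≤ y s * G s := by
    intro s
    have e1 : y s * G s = a s + y s * (G s - f s) := by
      simp only [hadef]; ring
    have h1 := abs_le.mp (hGf s)
    have h2 : -1 ≤ y s * (G s - f s) := by
      rcases hy s with hys | hys <;> rw [hys] <;> linarith [h1.1, h1.2]
    linarith [e1.ge, e1.le, h2]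
  have hlt : ∀ s, ℓ s ≤ t s := by
    intro s
    have := Real.log_le_sub_one_of_pos (show (0:ℝ) < 1 + t s by have := htpos s; linarith)
    simp only [hldef] at *
    linarith
  have hper : ∀ s, (5/6) * ℓ s * D ≤ y s * G s / (1 + Real.exp (a s)) := by
    intro s
    have key := key_ineq hclb (htpos s).le (hta1 s) (htc s) (ha16 s)
    have hac : 0 ≤ a s + 2 * Real.log (n:ℝ) := by
      have := ha16 s; have := hclb; linarith
    have step1 : (5/6) * ℓ s * D ≤ (5/6) * (t s * (a s + 2 * Real.log (n:ℝ))) := by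
      have := mul_le_mul (hlt s) (hD_le s) hD0 (htpos s).le
      nlinarith [hlpos s, hD0]
    have h1t : (0:ℝ) < 1 + t s := by have := htpos s; linarith
    have step2 : (5/6) * (t s * (a s + 2 * Real.log (n:ℝ)))
        ≤ (a s - 1) * (t s / (1 + t s)) := by
      have e : (5/6) * (t s * (a s + 2 * Real.log (n:ℝ)))
          = ((5/6) * ((1 + t s) * (a s + 2 * Real.log (n:ℝ)))) * (t s / (1 + t s)) := by
        field_simp
      rw [e]
      exact mul_le_mul_of_nonneg_right key (by positivity)
    have e3 : t s / (1 + t s) = 1 / (1 + Real.exp (a s)) := by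
      have he : t s = (Real.exp (a s))⁻¹ := by
        simp only [htdef]; rw [Real.exp_neg]
      rw [he]
      have := Real.exp_pos (a s)
      field_simp
      ring
    have hEpos : (0:ℝ) < 1 + Real.exp (a s) := by positivity
    have step3 : (a s - 1) * (t s / (1 + t s)) = (a s - 1) / (1 + Real.exp (a s)) := by
      rw [e3]; ring
    have step4 : (a s - 1) / (1 + Real.exp (a s)) ≤ y s * G s / (1 + Real.exp (a s)) := by
      gcongr
      exact hyG s
    linarith
  -- gradient inner products
  have hgrow : ∀ i, (inner ℝ (V i) (lossGradRow p n d h u x y V i) : ℝ)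
      = ∑ s, (-(u i)/(n:ℝ)) * ((hrelu' h ((inner ℝ (V i) (x s) : ℝ)) * y s
          / (1 + Real.exp (a s))) * (inner ℝ (V i) (x s) : ℝ)) := by
    intro i
    rw [lossGradRow]
    rw [real_inner_smul_right, inner_sum, Finset.mul_sum]
    apply Finset.sum_congr rfl
    intro s _
    rw [real_inner_smul_right]
    try simp only [hadef, hfdef]
  have hsum : ∑ i, (inner ℝ (V i) (lossGradRow p n d h u x y V i) : ℝ)
      = -(1/(n:ℝ)) * ∑ s, y s * G s / (1 + Real.exp (a s)) := by
    simp only [hgrow]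
    rw [Finset.sum_comm, Finset.mul_sum]
    apply Finset.sum_congr rfl
    intro s _
    simp only [hGdef, Finset.mul_sum, Finset.sum_div]
    apply Finset.sum_congr rfl
    intro i _
    ring
  -- Cauchy-Schwarz
  have hCS : (1/(n:ℝ)) * ∑ s, y s * G s / (1 + Real.exp (a s))
      ≤ Real.sqrt (∑ i, ‖V i‖^2) *
        Real.sqrt (∑ i, ‖lossGradRow p n d h u x y V i‖^2) := by
    have e1 : (1/(n:ℝ)) * ∑ s, y s * G s / (1 + Real.exp (a s))
        = ∑ i, -(inner ℝ (V i) (lossGradRow p n d h u x y V i) : ℝ) := by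
      rw [Finset.sum_neg_distrib, hsum]
      ring
    rw [e1]
    calc ∑ i, -(inner ℝ (V i) (lossGradRow p n d h u x y V i) : ℝ)
        ≤ ∑ i, ‖V i‖ * ‖lossGradRow p n d h u x y V i‖ := by
          apply Finset.sum_le_sum
          intro i _
          have h1 := abs_real_inner_le_norm (V i) (lossGradRow p n d h u x y V i)
          have h2 := neg_abs_le ((inner ℝ (V i) (lossGradRow p n d h u x y V i) : ℝ))
          linarith
      _ ≤ _ := Real.sum_mul_le_sqrt_mul_sqrt _ _ _
  -- lower bound on the sum
  have hlow : (5/6) * L * D ≤ (1/(n:ℝ)) * ∑ s, y s * G s / (1 + Real.exp (a s)) := by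
    have e2 : (5/6) * L * D = ∑ s, (1/(n:ℝ)) * ((5/6) * ℓ s * D) := by
      rw [hLsum]
      simp only [Finset.mul_sum, Finset.sum_mul]
      exact Finset.sum_congr rfl (fun s _ => by ring)
    rw [e2, Finset.mul_sum]
    apply Finset.sum_le_sum
    intro s _
    have := hper s
    have : (0:ℝ) ≤ 1/(n:ℝ) := by positivity
    exact mul_le_mul_of_nonneg_left (hper s) this
  -- finish
  rcases eq_or_lt_of_le (Real.sqrt_nonneg (∑ i, ‖V i‖^2)) with hV | hV
  · rw [ge_iff_le, ← hV, div_zero]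
    exact Real.sqrt_nonneg _
  · rw [ge_iff_le, div_le_iff₀ hV]
    calc (5/6) * L * D ≤ (1/(n:ℝ)) * ∑ s, y s * G s / (1 + Real.exp (a s)) := hlow
      _ ≤ Real.sqrt (∑ i, ‖V i‖^2) *
          Real.sqrt (∑ i, ‖lossGradRow p n d h u x y V i‖^2) := hCS
      _ = Real.sqrt (∑ i, ‖lossGradRow p n d h u x y V i‖^2) *
          Real.sqrt (∑ i, ‖V i‖^2) := mul_comm _ _
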